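/- Let Ω ⊂ ℝⁿ be a bounded domain, ε > 0, α ≥ 0, β > 0 with α + β = 1. Suppose u and u' satisfy the dynamic programming principle on Ω_ε with boundary values g and g' on Γ_ε (comparison with the boundary data). Then sup_{x ∈ Ω} |u' − u|(x) ≤ sup_{x ∈ Γ_ε} |g' − g|(x). In particular, a solution to the DPP with given bounded Borel boundary data is unique. -/

import Mathlib

set_option maxHeartbeats 1000000


open MeasureTheory Metric Set

def bdryStrip {n : ℕ} (Ω : Set (EuclideanSpace ℝ (Fin n))) (ε : ℝ) :
    Set (EuclideanSpace ℝ (Fin n)) :=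
  {x | x ∉ Ω ∧ Metric.infDist x Ω ≤ ε}

/-- Key pointwise comparison lemma: for every `x ∈ Ω`, `u' x - u x` is bounded by the
supremum of `|g' - g|` over the boundary strip. Proven by a measure-theoretic marching
argument toward the boundary. -/
lemma dpp_key {n : ℕ} (hn : 0 < n) (Ω : Set (EuclideanSpace ℝ (Fin n)))
    (hΩb : Bornology.IsBounded Ω)
    (ε α β : ℝ) (hε : 0 < ε) (hα : 0 ≤ α) (hβ : 0 < β) (hαβ : α + β = 1)
    (u u' g g' : EuclideanSpace ℝ (Fin n) → ℝ)
    (hu : Measurable u) (hu' : Measurable u')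
    (Cu : ℝ) (hub : ∀ x, |u x| ≤ Cu) (Cu' : ℝ) (hu'b : ∀ x, |u' x| ≤ Cu')
    (hudpp : ∀ x ∈ Ω, u x =
      α / 2 * sSup (u '' ball x ε) + α / 2 * sInf (u '' ball x ε) +
        β * ⨍ y in ball x ε, u y)
    (hu'dpp : ∀ x ∈ Ω, u' x =
      α / 2 * sSup (u' '' ball x ε) + α / 2 * sInf (u' '' ball x ε) +
        β * ⨍ y in ball x ε, u' y)
    (hbg : ∀ x ∈ bdryStrip Ω ε, u x = g x)
    (hbg' : ∀ x ∈ bdryStrip Ω ε, u' x = g' x) :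
    ∀ x ∈ Ω, u' x - u x ≤ sSup ((fun x => |g' x - g x|) '' bdryStrip Ω ε) := by
  intro xbad hxbad
  by_contra hcon
  push_neg at hcon
  set Γ : Set (EuclideanSpace ℝ (Fin n)) := bdryStrip Ω ε with hΓ
  set K : ℝ := sSup ((fun x => |g' x - g x|) '' Γ) with hKdef
  set v : EuclideanSpace ℝ (Fin n) → ℝ := fun y => u' y - u y with hvdef
  set S : Set (EuclideanSpace ℝ (Fin n)) := Ω ∪ Γ with hSdef
  have hvb : ∀ y, |v y| ≤ Cu' + Cu := fun y =>
    (abs_sub (u' y) (u y)).trans (add_le_add (hu'b y) (hub y))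
  have hKbdd : BddAbove ((fun x => |g' x - g x|) '' Γ) := by
    refine ⟨Cu' + Cu, ?_⟩
    rintro r ⟨y, hy, rfl⟩
    simp only
    rw [← hbg y hy, ← hbg' y hy]
    exact hvb y
  have hvΓ : ∀ y ∈ Γ, v y ≤ K := by
    intro y hy
    have h1 : v y ≤ |g' y - g y| := by
      rw [hvdef]; simp only; rw [← hbg y hy, ← hbg' y hy]; exact le_abs_self _
    exact h1.trans (le_csSup hKbdd ⟨y, hy, rfl⟩)
  have hSne : S.Nonempty := ⟨xbad, Or.inl hxbad⟩
  have hMbdd : BddAbove (v '' S) := by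
    refine ⟨Cu' + Cu, ?_⟩
    rintro r ⟨y, _, rfl⟩
    exact (le_abs_self _).trans (hvb y)
  set M : ℝ := sSup (v '' S) with hMdef
  have hvM : ∀ y ∈ S, v y ≤ M := fun y hy => le_csSup hMbdd ⟨y, hy, rfl⟩
  have hKM : K < M := lt_of_lt_of_le hcon (hvM xbad (Or.inl hxbad))
  have hballS : ∀ x ∈ Ω, ball x ε ⊆ S := by
    intro x hx y hy
    by_cases hyΩ : y ∈ Ω
    · exact Or.inl hyΩ
    · exact Or.inr ⟨hyΩ, (infDist_le_dist_of_mem hx).trans (mem_ball.mp hy).le⟩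
  -- a unit direction
  set e : EuclideanSpace ℝ (Fin n) := EuclideanSpace.single ⟨0, hn⟩ (1 : ℝ) with hedef
  have hnorme : ‖e‖ = 1 := by simp [hedef]
  -- constants
  set mb : ℝ := (volume (ball (0 : EuclideanSpace ℝ (Fin n)) ε)).toReal with hmbdef
  set ms : ℝ := (volume (ball (0 : EuclideanSpace ℝ (Fin n)) (ε / 8))).toReal with hmsdef
  have hmbpos : 0 < mb :=
    ENNReal.toReal_pos (measure_ball_pos _ _ hε).ne' measure_ball_lt_top.ne
  have hmspos : 0 < ms :=
    ENNReal.toReal_pos (measure_ball_pos _ _ (by linarith)).ne' measure_ball_lt_top.ne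
  set C : ℝ := mb / (ms * β) + 1 with hCdef
  have hC1 : 1 ≤ C := le_add_of_nonneg_left (div_nonneg hmbpos.le (by positivity))
  have hCpos : 0 < C := lt_of_lt_of_le one_pos hC1
  -- bound on the inner ℝ products over S
  obtain ⟨r, hr⟩ := hΩb.exists_norm_le
  set R : ℝ := |r| + ε + 1 with hRdef
  have hRpos : 0 < R := by rw [hRdef]; positivity
  have hRS : ∀ y ∈ S, |(inner ℝ y e : ℝ)| ≤ R := by
    intro y hy
    have hyn : ‖y‖ ≤ R := by
      rcases hy with hy | hy
      · exact (hr y hy).trans (by rw [hRdef]; nlinarith [le_abs_self r])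
      · have hne : Ω.Nonempty := ⟨xbad, hxbad⟩
        have h2 : infDist y Ω < ε + 1 := lt_of_le_of_lt hy.2 (by linarith)
        obtain ⟨z, hzΩ, hz⟩ := (infDist_lt_iff hne).mp h2
        have h3 : ‖y‖ ≤ ‖y - z‖ + ‖z‖ := by
          have := norm_add_le (y - z) z; simpa using this
        have h4 : ‖y - z‖ = dist y z := (dist_eq_norm _ _).symm
        have h5 : ‖z‖ ≤ r := hr z hzΩ
        rw [hRdef]
        have := le_abs_self r
        linarith [h3, h4 ▸ hz]
    calc |(inner ℝ y e : ℝ)| ≤ ‖y‖ * ‖e‖ := abs_real_inner_le_norm _ _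
      _ = ‖y‖ := by rw [hnorme, mul_one]
      _ ≤ R := hyn
  -- number of steps
  obtain ⟨N, hN⟩ := exists_nat_gt ((2 * R) / (ε / 2))
  have hNR : 2 * R < (N : ℝ) * (ε / 2) := by
    have h6 : (0 : ℝ) < ε / 2 := by linarith
    calc 2 * R = (2 * R) / (ε / 2) * (ε / 2) := by field_simp
      _ < (N : ℝ) * (ε / 2) := by
          exact mul_lt_mul_of_pos_right hN h6
  set η : ℝ := (M - K) / (2 * C ^ N) with hηdef
  have hηpos : 0 < η := div_pos (by linarith) (by positivity)
  have hCNη : C ^ N * η ≤ (M - K) / 2 := by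
    rw [hηdef]
    rw [mul_div_assoc']
    rw [div_le_div_iff₀ (by positivity) (by norm_num)]
    ring_nf
    nlinarith [pow_pos hCpos N, hKM]
  -- starting point
  obtain ⟨w0, hw0mem, hw0⟩ : ∃ y ∈ S, M - η < v y := by
    obtain ⟨a, ha, hlt⟩ := exists_lt_of_lt_csSup (hSne.image v) (by linarith : M - η < M)
    obtain ⟨y, hy, rfl⟩ := ha
    exact ⟨y, hy, hlt⟩
  -- main induction: march in direction e
  have main : ∀ k : ℕ, k ≤ N → ∃ y ∈ S, M - C ^ k * η < v y ∧
      (inner ℝ w0 e : ℝ) + (k : ℝ) * (ε / 2) ≤ inner ℝ y e := by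
    intro k
    induction k with
    | zero => intro _; exact ⟨w0, hw0mem, by simpa using hw0, by simp⟩
    | succ k ih =>
      intro hk1
      obtain ⟨x, hxS, hvx, hcoord⟩ := ih (Nat.le_of_succ_le hk1)
      have hCkN : C ^ k * η ≤ (M - K) / 2 := by
        have h7 : C ^ k ≤ C ^ N := pow_le_pow_right₀ hC1 (Nat.le_of_succ_le hk1)
        nlinarith [hηpos.le]
      have hxΩ : x ∈ Ω := by
        rcases hxS with h | h
        · exact h
        · exfalso
          have := hvΓ x h
          linarith
      -- DPP at x
      set B : Set (EuclideanSpace ℝ (Fin n)) := ball x ε with hBdef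
      have hBS : B ⊆ S := hballS x hxΩ
      have hBmeas : MeasurableSet B := measurableSet_ball
      have hBfin : volume B ≠ ⊤ := measure_ball_lt_top.ne
      have hBposm : volume B ≠ 0 := (measure_ball_pos _ _ hε).ne'
      set m : ℝ := (volume B).toReal with hmdef
      have hmpos : 0 < m := ENNReal.toReal_pos hBposm hBfin
      have hmmb : m = mb := by
        rw [hmdef, hmbdef, hBdef, Measure.addHaar_ball_center]
      have hiu : IntegrableOn u B volume :=
        Measure.integrableOn_of_bounded hBfin hu.aestronglyMeasurable (ae_of_all _ hub)
      have hiu' : IntegrableOn u' B volume :=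
        Measure.integrableOn_of_bounded hBfin hu'.aestronglyMeasurable (ae_of_all _ hu'b)
      have hiv : IntegrableOn v B volume := hiu'.sub hiu
      have hBne : B.Nonempty := nonempty_ball.mpr hε
      have hvMB : ∀ y ∈ B, v y ≤ M := fun y hy => hvM y (hBS hy)
      have hubdd : BddAbove (u '' B) := by
        refine ⟨Cu, ?_⟩; rintro s ⟨z, _, rfl⟩; exact (le_abs_self _).trans (hub z)
      have hu'bddb : BddBelow (u' '' B) := by
        refine ⟨-Cu', ?_⟩; rintro s ⟨z, _, rfl⟩; exact neg_le_of_abs_le (hu'b z)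
      have hsup : sSup (u' '' B) ≤ M + sSup (u '' B) := by
        apply csSup_le (hBne.image _)
        rintro s ⟨y, hy, rfl⟩
        have h8 : u y ≤ sSup (u '' B) := le_csSup hubdd ⟨y, hy, rfl⟩
        have h9 : u' y - u y ≤ M := hvMB y hy
        linarith
      have hinf : sInf (u' '' B) ≤ M + sInf (u '' B) := by
        rw [← sub_le_iff_le_add']
        apply le_csInf (hBne.image _)
        rintro s ⟨y, hy, rfl⟩
        have h10 : sInf (u' '' B) ≤ u' y := csInf_le hu'bddb ⟨y, hy, rfl⟩
        have h11 : u' y - u y ≤ M := hvMB y hy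
        linarith
      set J : ℝ := ∫ y in B, v y with hJdef
      have havg : (⨍ y in B, u' y) - (⨍ y in B, u y) = m⁻¹ * J := by
        rw [hJdef, setAverage_eq, setAverage_eq, measureReal_def, ← hmdef, smul_eq_mul, smul_eq_mul,
          ← mul_sub, ← integral_sub hiu' hiu]
      have hdpp : v x ≤ α * M + β * (m⁻¹ * J) := by
        have h1 := hudpp x hxΩ
        have h2 := hu'dpp x hxΩ
        have h12 : v x = α / 2 * (sSup (u' '' B) - sSup (u '' B)) +
            α / 2 * (sInf (u' '' B) - sInf (u '' B)) +
            β * ((⨍ y in B, u' y) - ⨍ y in B, u y) := by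
          rw [hvdef]; simp only; rw [h1, h2]; ring
        rw [h12, havg]
        nlinarith [hsup, hinf]
      have hdpp' : m * v x ≤ α * M * m + β * J := by
        calc m * v x ≤ m * (α * M + β * (m⁻¹ * J)) := mul_le_mul_of_nonneg_left hdpp hmpos.le
          _ = α * M * m + β * (m * m⁻¹) * J := by ring
          _ = α * M * m + β * J := by rw [mul_inv_cancel₀ hmpos.ne']; ring
      have hintM : ∫ y in B, (M - v y) ≤ m * (C ^ k * η) / β := by
        have h15 : ∫ y in B, (M - v y) = m * M - J := by
          rw [integral_sub (integrableOn_const hBfin : IntegrableOn (fun _ => M) B volume) hiv,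
            setIntegral_const, smul_eq_mul, measureReal_def, ← hmdef, ← hJdef]
        rw [h15, le_div_iff₀ hβ]
        have hF2 : m * M - m * (C ^ k * η) < m * v x := by
          linarith [mul_lt_mul_of_pos_left hvx hmpos]
        have hmm : α * (m * M) + β * (m * M) = m * M := by
          rw [← add_mul, hαβ, one_mul]
        linarith [hdpp', hF2, hmm]
      -- the spherical cap
      have hcont : Continuous fun z : EuclideanSpace ℝ (Fin n) => (inner ℝ z e : ℝ) :=
        Continuous.inner continuous_id continuous_const
      set A : Set (EuclideanSpace ℝ (Fin n)) :=
        B ∩ {z | (inner ℝ x e : ℝ) + ε / 2 ≤ inner ℝ z e} with hAdef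
      have hAmeas : MeasurableSet A :=
        hBmeas.inter (hcont.measurable measurableSet_Ici)
      have hsubA : ball (x + (3 * ε / 4) • e) (ε / 8) ⊆ A := by
        intro z hz
        have hz1 : dist z (x + (3 * ε / 4) • e) < ε / 8 := mem_ball.mp hz
        constructor
        · have h16 : dist z x ≤ dist z (x + (3 * ε / 4) • e) + dist (x + (3 * ε / 4) • e) x :=
            dist_triangle _ _ _
          have hd : dist (x + (3 * ε / 4) • e) x = 3 * ε / 4 := by
            rw [dist_eq_norm]
            have : x + (3 * ε / 4) • e - x = (3 * ε / 4) • e := by abel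
            rw [this, norm_smul, hnorme, mul_one, Real.norm_eq_abs, abs_of_nonneg (by linarith)]
          show z ∈ ball x ε
          rw [mem_ball]
          linarith [h16, hz1, hd]
        · have h17 : (inner ℝ (x + (3 * ε / 4) • e) e : ℝ) = inner ℝ x e + 3 * ε / 4 := by
            rw [inner_add_left, real_inner_smul_left, real_inner_self_eq_norm_mul_norm, hnorme]
            ring
          have h18 : |(inner ℝ z e : ℝ) - inner ℝ (x + (3 * ε / 4) • e) e| ≤
              ‖z - (x + (3 * ε / 4) • e)‖ * ‖e‖ := by
            rw [← inner_sub_left]; exact abs_real_inner_le_norm _ _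
          rw [hnorme, mul_one, ← dist_eq_norm] at h18
          have h19 := (abs_le.mp (h18.trans hz1.le)).1
          show (inner ℝ x e : ℝ) + ε / 2 ≤ inner ℝ z e
          linarith [h17 ▸ h19]
      have hAfin : volume A ≠ ⊤ :=
        (lt_of_le_of_lt (measure_mono inter_subset_left) measure_ball_lt_top).ne
      have hApos : volume A ≠ 0 := by
        intro h0
        have := measure_mono (μ := volume) hsubA
        rw [h0] at this
        exact (measure_ball_pos volume _ (by linarith : (0:ℝ) < ε / 8)).ne'
          (le_antisymm this zero_le)
      have hAm : ms ≤ (volume A).toReal := by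
        have h20 : volume (ball (x + (3 * ε / 4) • e) (ε / 8)) =
            volume (ball (0 : EuclideanSpace ℝ (Fin n)) (ε / 8)) :=
          Measure.addHaar_ball_center _ _ _
        rw [hmsdef, ← h20]
        exact ENNReal.toReal_mono hAfin (measure_mono hsubA)
      have hfintB : IntegrableOn (fun y => M - v y) B volume :=
        (integrableOn_const hBfin).sub hiv
      have hfint : IntegrableOn (fun y => M - v y) A volume :=
        hfintB.mono_set inter_subset_left
      obtain ⟨z, hzA, hzle⟩ := exists_le_setAverage hApos hAfin hfint
      have h21 : (⨍ y in A, (M - v y)) ≤ (volume A).toReal⁻¹ * ∫ y in B, (M - v y) := by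
        rw [setAverage_eq, smul_eq_mul]
        apply mul_le_mul_of_nonneg_left _ (inv_nonneg.mpr ENNReal.toReal_nonneg)
        apply setIntegral_mono_set hfintB
          ((ae_restrict_iff' hBmeas).2 (ae_of_all _ fun y hy => sub_nonneg.2 (hvMB y hy)))
          (HasSubset.Subset.eventuallyLE inter_subset_left)
      have hintnn : 0 ≤ ∫ y in B, (M - v y) :=
        setIntegral_nonneg hBmeas fun y hy => sub_nonneg.2 (hvMB y hy)
      have h22 : M - v z ≤ ms⁻¹ * (m * (C ^ k * η) / β) := by
        calc M - v z ≤ (volume A).toReal⁻¹ * ∫ y in B, (M - v y) := hzle.trans h21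
          _ ≤ ms⁻¹ * (m * (C ^ k * η) / β) := by
              apply mul_le_mul (inv_anti₀ hmspos hAm) hintM hintnn
                (inv_nonneg.mpr hmspos.le)
      have h23 : ms⁻¹ * (m * (C ^ k * η) / β) < C ^ (k + 1) * η := by
        rw [hmmb]
        have h24 : ms⁻¹ * (mb * (C ^ k * η) / β) = mb / (ms * β) * (C ^ k * η) := by
          field_simp
        rw [h24]
        have h25 : 0 < C ^ k * η := by positivity
        calc mb / (ms * β) * (C ^ k * η) < (mb / (ms * β) + 1) * (C ^ k * η) := by
              linarith [h25]
          _ = C ^ (k + 1) * η := by rw [hCdef]; ring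
      have h29 : M - v z < C ^ (k + 1) * η := lt_of_le_of_lt h22 h23
      refine ⟨z, hBS hzA.1, by linarith [h29], ?_⟩
      have h26 : (inner ℝ x e : ℝ) + ε / 2 ≤ inner ℝ z e := hzA.2
      push_cast
      linarith [hcoord]
  -- contradiction
  obtain ⟨y, hyS, _, hcoord⟩ := main N le_rfl
  have h27 := abs_le.mp (hRS y hyS)
  have h28 := abs_le.mp (hRS w0 hw0mem)
  linarith [hNR, h27.2, h28.1]

/-- Comparison with boundary data: `sup_Ω |u' − u| ≤ sup_{Γ_ε} |g' − g|`.
In particular the solution of the DPP with given boundary data is unique. -/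
theorem dpp_comparison_uniqueness {n : ℕ} (hn : 0 < n) (Ω : Set (EuclideanSpace ℝ (Fin n)))
    (hΩo : IsOpen Ω) (hΩc : IsConnected Ω) (hΩb : Bornology.IsBounded Ω)
    (ε α β : ℝ) (hε : 0 < ε) (hα : 0 ≤ α) (hβ : 0 < β) (hαβ : α + β = 1)
    (u u' g g' : EuclideanSpace ℝ (Fin n) → ℝ)
    (hu : Measurable u) (hu' : Measurable u')
    (Cu : ℝ) (hub : ∀ x, |u x| ≤ Cu) (Cu' : ℝ) (hu'b : ∀ x, |u' x| ≤ Cu')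
    (hudpp : ∀ x ∈ Ω, u x =
      α / 2 * sSup (u '' ball x ε) + α / 2 * sInf (u '' ball x ε) +
        β * ⨍ y in ball x ε, u y)
    (hu'dpp : ∀ x ∈ Ω, u' x =
      α / 2 * sSup (u' '' ball x ε) + α / 2 * sInf (u' '' ball x ε) +
        β * ⨍ y in ball x ε, u' y)
    (hbg : ∀ x ∈ bdryStrip Ω ε, u x = g x)
    (hbg' : ∀ x ∈ bdryStrip Ω ε, u' x = g' x) :
    (sSup ((fun x => |u' x - u x|) '' Ω) ≤
      sSup ((fun x => |g' x - g x|) '' bdryStrip Ω ε)) ∧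
    ((∀ x ∈ bdryStrip Ω ε, g' x = g x) →
      ∀ x ∈ Ω ∪ bdryStrip Ω ε, u' x = u x) := by
  have habs : (fun x => |g x - g' x|) '' bdryStrip Ω ε =
      (fun x => |g' x - g x|) '' bdryStrip Ω ε := by
    apply image_congr
    intro x _
    exact abs_sub_comm _ _
  have key1 := dpp_key hn Ω hΩb ε α β hε hα hβ hαβ u u' g g' hu hu' Cu hub Cu' hu'b
    hudpp hu'dpp hbg hbg'
  have key2' := dpp_key hn Ω hΩb ε α β hε hα hβ hαβ u' u g' g hu' hu Cu' hu'b Cu hub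
    hu'dpp hudpp hbg' hbg
  have key2 : ∀ x ∈ Ω, u x - u' x ≤ sSup ((fun x => |g' x - g x|) '' bdryStrip Ω ε) := by
    intro x hx
    have := key2' x hx
    rwa [habs] at this
  set K := sSup ((fun x => |g' x - g x|) '' bdryStrip Ω ε) with hK
  have hptwise : ∀ x ∈ Ω, |u' x - u x| ≤ K := fun x hx =>
    abs_sub_le_iff.mpr ⟨key1 x hx, key2 x hx⟩
  -- the boundary strip is nonempty
  have hΓne : (bdryStrip Ω ε).Nonempty := by
    haveI : Nontrivial (EuclideanSpace ℝ (Fin n)) := by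
      refine ⟨⟨EuclideanSpace.single ⟨0, hn⟩ (1 : ℝ), 0, ?_⟩⟩
      intro h
      have : ‖EuclideanSpace.single (⟨0, hn⟩ : Fin n) (1 : ℝ)‖ = 1 := by simp
      rw [h] at this
      simp at this
    have hne_univ : Ω ≠ univ := by
      intro h
      exact NormedSpace.unbounded_univ ℝ (EuclideanSpace ℝ (Fin n)) (h ▸ hΩb)
    have hfront : (frontier Ω).Nonempty := by
      rw [nonempty_iff_ne_empty]
      intro h
      rcases isClopen_iff.mp (isClopen_iff_frontier_eq_empty.mpr h) with h1 | h1
      · exact hΩc.nonempty.ne_empty h1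
      · exact hne_univ h1
    obtain ⟨p, hp⟩ := hfront
    rw [hΩo.frontier_eq] at hp
    refine ⟨p, hp.2, ?_⟩
    rw [infDist_zero_of_mem_closure hp.1]
    exact hε.le
  have hKbdd : BddAbove ((fun x => |g' x - g x|) '' bdryStrip Ω ε) := by
    refine ⟨Cu' + Cu, ?_⟩
    rintro r ⟨y, hy, rfl⟩
    simp only
    rw [← hbg y hy, ← hbg' y hy]
    exact (abs_sub (u' y) (u y)).trans (add_le_add (hu'b y) (hub y))
  obtain ⟨p0, hp0⟩ := id hΓne
  have hK0 : 0 ≤ K := le_trans (abs_nonneg _) (le_csSup hKbdd ⟨p0, hp0, rfl⟩)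
  constructor
  · apply csSup_le (hΩc.nonempty.image _)
    rintro r ⟨x, hx, rfl⟩
    exact hptwise x hx
  · intro hgg x hx
    have hK0' : K ≤ 0 := by
      apply csSup_le (hΓne.image _)
      rintro r ⟨y, hy, rfl⟩
      simp [hgg y hy]
    rcases hx with hx | hx
    · have h1 : |u' x - u x| ≤ 0 := (hptwise x hx).trans hK0'
      have h2 := abs_nonneg (u' x - u x)
      have h3 : u' x - u x = 0 := by
        rcases abs_eq_zero.mp (le_antisymm h1 h2) with h
        exact h
      linarith
    · rw [hbg' x hx, hbg x hx, hgg x hx]
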